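/- The dense local order S(2) is ultrahomogeneous: for all finite subsets A, B of S(2) and every bijection h : A → B such that for all x, y ∈ A, x → y if and only if h(x) → h(y), there is a bijection g : S(2) → S(2) preserving → in both directions with g(a) = h(a) for all a ∈ A. -/

import Mathlib

namespace Stmt15

/-- The vertex set of the dense local order `S(2)`: rational points of the circle,
identified with their arguments as fractions of a full turn. -/
def S2 : Type := {q : ℚ // 0 ≤ q ∧ q < 1}

/-- The tournament relation of `S(2)`: `x → y` iff the fractional part of `y - x` lies
strictly between `0` and `1/2`. -/
def s2rel (x y : S2) : Prop :=
  0 < Int.fract (y.1 - x.1) ∧ Int.fract (y.1 - x.1) < 1/2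

def relQ (x y : ℚ) : Prop := 0 < Int.fract (y - x) ∧ Int.fract (y - x) < 1/2

noncomputable def ap (x : ℚ) : ℚ := Int.fract (x + 1/2)

lemma fract_add_fract (a b : ℚ) : Int.fract (Int.fract a + b) = Int.fract (a + b) :=
  Int.fract_eq_fract.2 ⟨-⌊a⌋, by rw [Int.fract]; push_cast; ring⟩

lemma fract_sub_fract (a b : ℚ) : Int.fract (Int.fract b - Int.fract a) = Int.fract (b - a) :=
  Int.fract_eq_fract.2 ⟨⌊a⌋ - ⌊b⌋, by rw [Int.fract, Int.fract]; push_cast; ring⟩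

lemma fract_sub_fract' (a b : ℚ) : Int.fract (b - Int.fract a) = Int.fract (b - a) :=
  Int.fract_eq_fract.2 ⟨⌊a⌋, by rw [Int.fract]; push_cast; ring⟩

lemma relQ_fract (a b : ℚ) : relQ (Int.fract a) (Int.fract b) ↔ relQ a b := by
  unfold relQ; rw [fract_sub_fract]

lemma relQ_congr {x y a b : ℚ} (h : y - x = b - a) : relQ x y ↔ relQ a b := by
  unfold relQ; rw [h]

lemma ap_mem (x : ℚ) : 0 ≤ ap x ∧ ap x < 1 := ⟨Int.fract_nonneg _, Int.fract_lt_one _⟩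

lemma ap_eq_low {x : ℚ} (h0 : 0 ≤ x) (h : x < 1/2) : ap x = x + 1/2 :=
  Int.fract_eq_self.2 ⟨by linarith, by linarith⟩

lemma ap_eq_high {x : ℚ} (h0 : 1/2 ≤ x) (h : x < 1) : ap x = x - 1/2 := by
  have : x + 1/2 = (x - 1/2) + 1 := by ring
  rw [ap, this, Int.fract_add_one, Int.fract_eq_self.2 ⟨by linarith, by linarith⟩]

lemma fract_add_half (t : ℚ) :
    Int.fract (t + 1/2) = if Int.fract t < 1/2 then Int.fract t + 1/2 else Int.fract t - 1/2 := by
  have h1 : Int.fract (t + 1/2) = Int.fract (Int.fract t + 1/2) := (fract_add_fract t (1/2)).symm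
  have h0 := Int.fract_nonneg t
  have hlt := Int.fract_lt_one t
  split_ifs with hc
  · rw [h1, Int.fract_eq_self.2 ⟨by linarith, by linarith⟩]
  · rw [h1, show Int.fract t + 1/2 = (Int.fract t - 1/2) + 1 by ring, Int.fract_add_one,
      Int.fract_eq_self.2 ⟨by linarith, by linarith⟩]

lemma half_mem (t : ℚ) :
    (0 < Int.fract (t + 1/2) ∧ Int.fract (t + 1/2) < 1/2) ↔
      (1/2 < Int.fract t ∧ Int.fract t < 1) := by
  have h0 := Int.fract_nonneg t
  have hlt := Int.fract_lt_one t
  rw [fract_add_half]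
  split_ifs with hc
  · constructor
    · rintro ⟨h1, h2⟩; exact absurd h2 (by linarith)
    · rintro ⟨h1, h2⟩; exact absurd hc (by linarith)
  · constructor
    · rintro ⟨h1, h2⟩; exact ⟨by linarith, by linarith⟩
    · rintro ⟨h1, h2⟩; exact ⟨by linarith, by linarith⟩

lemma neg_mem (t : ℚ) :
    (0 < Int.fract (-t) ∧ Int.fract (-t) < 1/2) ↔
      (1/2 < Int.fract t ∧ Int.fract t < 1) := by
  have h0 := Int.fract_nonneg t
  have hlt := Int.fract_lt_one t
  by_cases hz : Int.fract t = 0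
  · rw [Int.fract_neg_eq_zero.2 hz, hz]
    constructor
    · rintro ⟨h1, _⟩; exact absurd h1 (by norm_num)
    · rintro ⟨h1, _⟩; exact absurd h1 (by norm_num)
  · rw [Int.fract_neg hz]
    have : 0 < Int.fract t := lt_of_le_of_ne h0 (Ne.symm hz)
    constructor
    · rintro ⟨h1, h2⟩; exact ⟨by linarith, by linarith⟩
    · rintro ⟨h1, h2⟩; exact ⟨by linarith, by linarith⟩

lemma relQ_iff {x y : ℚ} (hx0 : 0 ≤ x) (hx1 : x < 1) (hy0 : 0 ≤ y) (hy1 : y < 1) :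
    relQ x y ↔ ((x < y ∧ y < x + 1/2) ∨ y + 1/2 < x) := by
  rcases le_or_gt x y with hle | hlt
  · have : Int.fract (y - x) = y - x := Int.fract_eq_self.2 ⟨by linarith, by linarith⟩
    unfold relQ; rw [this]; constructor
    · rintro ⟨h1, h2⟩; exact Or.inl ⟨by linarith, by linarith⟩
    · rintro (⟨h1, h2⟩ | h1) <;> constructor <;> linarith
  · have : Int.fract (y - x) = y - x + 1 := by
      rw [← Int.fract_add_one (y - x), Int.fract_eq_self.2 ⟨by linarith, by linarith⟩]
    unfold relQ; rw [this]; constructor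
    · rintro ⟨h1, h2⟩; exact Or.inr (by linarith)
    · rintro (⟨h1, h2⟩ | h1) <;> constructor <;> linarith

lemma relQ_ap_left (x w : ℚ) : relQ (ap x) w ↔ relQ w x := by
  have key : Int.fract (w - ap x) = Int.fract ((w - x) + 1/2) := by
    rw [ap, fract_sub_fract', show w - (x + 1/2) = ((w - x) + 1/2) - (1:ℤ) by push_cast; ring,
      Int.fract_sub_intCast]
  have key2 : Int.fract (x - w) = Int.fract (-(w - x)) := by ring_nf
  unfold relQ
  rw [key, key2, half_mem, neg_mem]

lemma relQ_ap_right (x w : ℚ) : relQ w (ap x) ↔ relQ x w := by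
  have key : Int.fract (ap x - w) = Int.fract ((x - w) + 1/2) := by
    rw [ap, show Int.fract (x + 1/2) - w = -(w - Int.fract (x + 1/2)) by ring,
      show (x - w) + 1/2 = -((w - x) - 1/2) by ring]
    by_cases hz : Int.fract (w - Int.fract (x + 1/2)) = 0
    · rw [Int.fract_neg_eq_zero.2 hz, eq_comm, Int.fract_neg_eq_zero]
      rw [fract_sub_fract', show w - (x + 1/2) = ((w - x) - 1/2) by ring] at hz
      exact hz
    · rw [Int.fract_neg hz, fract_sub_fract', show w - (x + 1/2) = ((w - x) - 1/2) by ring] at *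
      rw [Int.fract_neg hz]
  unfold relQ
  have neg_mem' : ∀ t : ℚ, (1/2 < Int.fract (-t) ∧ Int.fract (-t) < 1) ↔
      (0 < Int.fract t ∧ Int.fract t < 1/2) := by
    intro t
    have := neg_mem (-t)
    rw [neg_neg] at this
    exact this.symm
  rw [key, half_mem, show x - w = -(w - x) by ring, neg_mem']

lemma ap_ap {x : ℚ} (h0 : 0 ≤ x) (h1 : x < 1) : ap (ap x) = x := by
  rw [ap, ap, fract_add_fract, show x + 1/2 + 1/2 = x + 1 by ring, Int.fract_add_one,
    Int.fract_eq_self.2 ⟨h0, h1⟩]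

lemma ap_ne {x : ℚ} (h0 : 0 ≤ x) (h1 : x < 1) : ap x ≠ x := by
  rcases lt_or_ge x (1/2) with h | h
  · rw [ap_eq_low h0 h]; intro he; linarith
  · rw [ap_eq_high h h1]; intro he; linarith

lemma not_relQ_ap_right (x : ℚ) : ¬ relQ x (ap x) := by
  rw [relQ_ap_right]; unfold relQ
  rw [show x - x = 0 by ring, Int.fract_zero]
  rintro ⟨h, _⟩; exact absurd h (by norm_num)

lemma not_relQ_self (x : ℚ) : ¬ relQ x x := by
  unfold relQ
  rw [show x - x = 0 by ring, Int.fract_zero]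
  rintro ⟨h, _⟩; exact absurd h (by norm_num)

lemma not_relQ_ap_left (x : ℚ) : ¬ relQ (ap x) x := by
  rw [relQ_ap_left]; exact not_relQ_self x

lemma eq_ap_of_not_relQ {x y : ℚ} (hx0 : 0 ≤ x) (hx1 : x < 1) (hy0 : 0 ≤ y) (hy1 : y < 1)
    (hne : x ≠ y) (h1 : ¬ relQ x y) (h2 : ¬ relQ y x) : y = ap x := by
  unfold relQ at h1 h2
  have hzx : Int.fract (y - x) ≠ 0 := by
    intro hz
    rcases Int.fract_eq_fract.1 (hz.trans (Int.fract_zero (R := ℚ)).symm) with ⟨z, hzz⟩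
    have hq : y - x - 0 = (z : ℚ) := hzz
    have h1 : (z : ℚ) < 1 := by linarith
    have h2 : (-1 : ℚ) < (z : ℚ) := by linarith
    have h1' : z < 1 := by exact_mod_cast h1
    have h2' : (-1 : ℤ) < z := by exact_mod_cast h2
    have hz0 : z = 0 := by omega
    rw [hz0] at hq
    simp at hq
    exact hne (by linarith)
  have hpos : 0 < Int.fract (y - x) := lt_of_le_of_ne (Int.fract_nonneg _) (Ne.symm hzx)
  have hbig : 1/2 ≤ Int.fract (y - x) := by
    by_contra hc
    exact h1 ⟨hpos, by linarith⟩
  have hxy : Int.fract (x - y) = 1 - Int.fract (y - x) := by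
    rw [show x - y = -(y - x) by ring, Int.fract_neg hzx]
  have hlt1 := Int.fract_lt_one (y - x)
  have hsmall : Int.fract (y - x) ≤ 1/2 := by
    by_contra hc
    exact h2 ⟨by rw [hxy]; linarith, by rw [hxy]; linarith⟩
  have ht : Int.fract (y - x) = 1/2 := le_antisymm hsmall hbig
  rw [ap, show x + 1/2 = Int.fract (y - x) + x by rw [ht]; ring, fract_add_fract,
    show y - x + x = y by ring, Int.fract_eq_self.2 ⟨hy0, hy1⟩]

lemma affine_interp (a b c d : ℚ) (hab : a < b) (hcd : c < d) :
    ∃ F F' : ℚ → ℚ, F a = c ∧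
      (∀ x, a ≤ x → x < b → c ≤ F x ∧ F x < d) ∧
      (∀ y, c ≤ y → y < d → a ≤ F' y ∧ F' y < b) ∧
      (∀ x, a ≤ x → x < b → F' (F x) = x) ∧
      (∀ y, c ≤ y → y < d → F (F' y) = y) ∧
      (∀ x1 x2, a ≤ x1 → x1 < x2 → x2 < b → F x1 < F x2) := by
  set k := (d - c) / (b - a) with hk
  have hba : (0:ℚ) < b - a := by linarith
  have hdc : (0:ℚ) < d - c := by linarith
  have hkpos : 0 < k := div_pos hdc hba
  have hk0 : k ≠ 0 := ne_of_gt hkpos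
  have hbk : (b - a) * k = d - c := by
    rw [hk, mul_div_assoc', mul_comm, mul_div_assoc, div_self (ne_of_gt hba), mul_one]
  refine ⟨fun x => c + (x - a) * k, fun y => a + (y - c) / k, by simp, ?_, ?_, ?_, ?_, ?_⟩
  · intro x hx1 hx2
    dsimp only
    constructor
    · nlinarith
    · nlinarith [mul_lt_mul_of_pos_right (show x - a < b - a by linarith) hkpos]
  · intro y hy1 hy2
    dsimp only
    constructor
    · have : 0 ≤ (y - c) / k := div_nonneg (by linarith) (le_of_lt hkpos)
      linarith
    · have : (y - c) / k < b - a := (div_lt_iff₀ hkpos).2 (by rw [hbk]; linarith)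
      linarith
  · intro x hx1 hx2
    dsimp only
    have : c + (x - a) * k - c = (x - a) * k := by ring
    rw [this, mul_div_assoc, div_self hk0, mul_one]
    ring
  · intro y hy1 hy2
    dsimp only
    have : a + (y - c) / k - a = (y - c) / k := by ring
    rw [this, div_mul_cancel₀ _ hk0]
    ring
  · intro x1 x2 h1 h2 h3
    dsimp only
    have := mul_lt_mul_of_pos_right (show x1 - a < x2 - a by linarith) hkpos
    linarith

lemma interp : ∀ (n : ℕ) (a b c d : ℚ), a < b → c < d →
    ∀ (s t : Fin n → ℚ), StrictMono s → StrictMono t →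
    (∀ i, a < s i ∧ s i < b) → (∀ i, c < t i ∧ t i < d) →
    ∃ F F' : ℚ → ℚ, F a = c ∧
      (∀ x, a ≤ x → x < b → c ≤ F x ∧ F x < d) ∧
      (∀ y, c ≤ y → y < d → a ≤ F' y ∧ F' y < b) ∧
      (∀ x, a ≤ x → x < b → F' (F x) = x) ∧
      (∀ y, c ≤ y → y < d → F (F' y) = y) ∧
      (∀ x1 x2, a ≤ x1 → x1 < x2 → x2 < b → F x1 < F x2) ∧
      (∀ i, F (s i) = t i) := by
  intro n
  induction n with
  | zero =>
    intro a b c d hab hcd s t _ _ _ _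
    obtain ⟨F, F', h1, h2, h3, h4, h5, h6⟩ := affine_interp a b c d hab hcd
    exact ⟨F, F', h1, h2, h3, h4, h5, h6, fun i => i.elim0⟩
  | succ m ih =>
    intro a b c d hab hcd s t hs ht hsb htb
    set s0 := s 0 with hs0
    set t0 := t 0 with ht0
    have hsucc : ∀ i : Fin m, s0 < s i.succ := fun i => hs (Fin.succ_pos i)
    have htsucc : ∀ i : Fin m, t0 < t i.succ := fun i => ht (Fin.succ_pos i)
    obtain ⟨Fl, Fl', hFla, hFlb, hFl'b, hFlrt, hFl'rt, hFlm⟩ :=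
      affine_interp a s0 c t0 (hsb 0).1 (htb 0).1
    obtain ⟨Fr, Fr', hFra, hFrb, hFr'b, hFrrt, hFr'rt, hFrm, hFrs⟩ :=
      ih s0 b t0 d (hsb 0).2 (htb 0).2 (fun i => s i.succ) (fun i => t i.succ)
        (fun i j hij => hs (Fin.succ_lt_succ_iff.2 hij))
        (fun i j hij => ht (Fin.succ_lt_succ_iff.2 hij))
        (fun i => ⟨hsucc i, (hsb i.succ).2⟩) (fun i => ⟨htsucc i, (htb i.succ).2⟩)
    refine ⟨fun x => if x < s0 then Fl x else Fr x,
            fun y => if y < t0 then Fl' y else Fr' y, ?_, ?_, ?_, ?_, ?_, ?_, ?_⟩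
    · simp only [if_pos (show a < s0 from (hsb 0).1), hFla]
    · intro x hx1 hx2
      dsimp only
      by_cases hc : x < s0
      · rw [if_pos hc]
        have := hFlb x hx1 hc
        exact ⟨this.1, by linarith [(htb 0).2, this.2]⟩
      · rw [if_neg hc]
        have := hFrb x (not_lt.1 hc) hx2
        exact ⟨by linarith [(htb 0).1, this.1], this.2⟩
    · intro y hy1 hy2
      dsimp only
      by_cases hc : y < t0
      · rw [if_pos hc]
        have := hFl'b y hy1 hc
        exact ⟨this.1, by linarith [(hsb 0).2, this.2]⟩
      · rw [if_neg hc]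
        have := hFr'b y (not_lt.1 hc) hy2
        exact ⟨by linarith [(hsb 0).1, this.1], this.2⟩
    · intro x hx1 hx2
      dsimp only
      by_cases hc : x < s0
      · rw [if_pos hc, if_pos (hFlb x hx1 hc).2, hFlrt x hx1 hc]
      · rw [if_neg hc, if_neg (not_lt.2 (hFrb x (not_lt.1 hc) hx2).1),
          hFrrt x (not_lt.1 hc) hx2]
    · intro y hy1 hy2
      dsimp only
      by_cases hc : y < t0
      · rw [if_pos hc, if_pos (hFl'b y hy1 hc).2, hFl'rt y hy1 hc]
      · rw [if_neg hc, if_neg (not_lt.2 (hFr'b y (not_lt.1 hc) hy2).1),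
          hFr'rt y (not_lt.1 hc) hy2]
    · intro x1 x2 h1 h2 h3
      dsimp only
      by_cases hc1 : x1 < s0
      · rw [if_pos hc1]
        by_cases hc2 : x2 < s0
        · rw [if_pos hc2]; exact hFlm x1 x2 h1 h2 hc2
        · rw [if_neg hc2]
          have := (hFlb x1 h1 hc1).2
          have := (hFrb x2 (not_lt.1 hc2) h3).1
          linarith
      · rw [if_neg hc1, if_neg (by push_neg at hc1 ⊢; linarith : ¬ x2 < s0)]
        exact hFrm x1 x2 (not_lt.1 hc1) h2 h3
    · intro i
      dsimp only
      refine Fin.cases ?_ ?_ i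
      · rw [if_neg (lt_irrefl s0), hFra]
      · intro j
        rw [if_neg (not_lt.2 (le_of_lt (hsucc j)))]
        exact hFrs j

noncomputable def D (F : ℚ → ℚ) : ℚ → ℚ := fun x => if x < 1/2 then F x else F (x - 1/2) + 1/2


lemma D_maps {F : ℚ → ℚ} (hFb : ∀ x, 0 ≤ x → x < 1/2 → 0 ≤ F x ∧ F x < 1/2) :
    ∀ x, 0 ≤ x → x < 1 → 0 ≤ D F x ∧ D F x < 1 := by
  intro x h0 h1
  unfold D
  split_ifs with hc
  · have := hFb x h0 hc
    exact ⟨this.1, by linarith [this.2]⟩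
  · have := hFb (x - 1/2) (by linarith [not_lt.1 hc]) (by linarith)
    exact ⟨by linarith [this.1], by linarith [this.2]⟩

lemma D_mono {F : ℚ → ℚ} (hFb : ∀ x, 0 ≤ x → x < 1/2 → 0 ≤ F x ∧ F x < 1/2)
    (hm : ∀ x1 x2, 0 ≤ x1 → x1 < x2 → x2 < 1/2 → F x1 < F x2) :
    ∀ x1 x2, 0 ≤ x1 → x1 < x2 → x2 < 1 → D F x1 < D F x2 := by
  intro x1 x2 h1 h2 h3
  unfold D
  split_ifs with hc1 hc2 hc2
  · exact hm x1 x2 h1 h2 hc2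
  · have := (hFb x1 h1 hc1).2
    have := (hFb (x2 - 1/2) (by linarith [not_lt.1 hc2]) (by linarith)).1
    linarith
  · exact absurd (h2.trans hc2) hc1
  · have := hm (x1 - 1/2) (x2 - 1/2) (by linarith [not_lt.1 hc1]) (by linarith) (by linarith)
    linarith

lemma D_ap {F : ℚ → ℚ} (hFb : ∀ x, 0 ≤ x → x < 1/2 → 0 ≤ F x ∧ F x < 1/2) :
    ∀ x, 0 ≤ x → x < 1 → D F (ap x) = ap (D F x) := by
  intro x h0 h1
  rcases lt_or_ge x (1/2) with hc | hc
  · have hFx := hFb x h0 hc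
    rw [ap_eq_low h0 hc]
    unfold D
    rw [if_neg (by linarith), if_pos hc, show x + 1/2 - 1/2 = x by ring,
      ap_eq_low hFx.1 hFx.2]
  · have hFx := hFb (x - 1/2) (by linarith) (by linarith)
    rw [ap_eq_high hc h1]
    unfold D
    rw [if_pos (by linarith), if_neg (not_lt.2 hc),
      ap_eq_high (by linarith [hFx.1]) (by linarith [hFx.2])]
    ring

lemma D_rt {F F' : ℚ → ℚ} (hFb : ∀ x, 0 ≤ x → x < 1/2 → 0 ≤ F x ∧ F x < 1/2)
    (hrt : ∀ x, 0 ≤ x → x < 1/2 → F' (F x) = x) :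
    ∀ x, 0 ≤ x → x < 1 → D F' (D F x) = x := by
  intro x h0 h1
  unfold D
  rcases lt_or_ge x (1/2) with hc | hc
  · rw [if_pos hc, if_pos (hFb x h0 hc).2]
    exact hrt x h0 hc
  · have hb := hFb (x - 1/2) (by linarith) (by linarith)
    rw [if_neg (not_lt.2 hc), if_neg (by linarith [hb.1] : ¬ F (x - 1/2) + 1/2 < 1/2),
      show F (x - 1/2) + 1/2 - 1/2 = F (x - 1/2) by ring, hrt (x - 1/2) (by linarith) (by linarith)]
    ring

lemma relpres {G : ℚ → ℚ}
    (hmaps : ∀ x, 0 ≤ x → x < 1 → 0 ≤ G x ∧ G x < 1)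
    (hmono : ∀ x y, 0 ≤ x → x < y → y < 1 → G x < G y)
    (hap : ∀ x, 0 ≤ x → x < 1 → G (ap x) = ap (G x)) :
    ∀ x y, 0 ≤ x → x < 1 → 0 ≤ y → y < 1 → relQ x y → relQ (G x) (G y) := by
  -- helper: G maps halves to halves
  have H1 : ∀ x, 0 ≤ x → x < 1/2 → G x < 1/2 := by
    intro x h0 h1
    by_contra hcon
    push_neg at hcon
    have hGap : G (ap x) = ap (G x) := hap x h0 (by linarith)
    rw [ap_eq_low h0 h1] at hGap
    have hlt : G x < G (x + 1/2) := hmono x (x + 1/2) h0 (by linarith) (by linarith)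
    rw [hGap, ap_eq_high hcon (hmaps x h0 (by linarith)).2] at hlt
    linarith
  have H2 : ∀ x, 0 ≤ x → x < 1/2 → G (x + 1/2) = G x + 1/2 := by
    intro x h0 h1
    have := hap x h0 (by linarith)
    rw [ap_eq_low h0 h1] at this
    rw [this, ap_eq_low (hmaps x h0 (by linarith)).1 (H1 x h0 h1)]
  intro x y hx0 hx1 hy0 hy1 hrel
  rw [relQ_iff hx0 hx1 hy0 hy1] at hrel
  rw [relQ_iff (hmaps x hx0 hx1).1 (hmaps x hx0 hx1).2 (hmaps y hy0 hy1).1 (hmaps y hy0 hy1).2]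
  rcases hrel with ⟨h1, h2⟩ | h1
  · rcases lt_or_ge x (1/2) with hc | hc
    · left
      refine ⟨hmono x y hx0 h1 hy1, ?_⟩
      rcases lt_or_ge y (1/2) with hcy | hcy
      · have := H1 y hy0 hcy
        have := (hmaps x hx0 hx1).1
        -- G y < 1/2 ≤ G x + 1/2
        linarith
      · -- y ≥ 1/2 : y = (y - 1/2) + 1/2, G y = G (y-1/2) + 1/2
        have hGy : G y = G (y - 1/2) + 1/2 := by
          have := H2 (y - 1/2) (by linarith) (by linarith)
          rw [show y - 1/2 + 1/2 = y by ring] at this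
          exact this
        have : G (y - 1/2) < G x := hmono (y - 1/2) x (by linarith) (by linarith) hx1
        linarith [hGy]
    · -- x ≥ 1/2, so y > 1/2 too
      left
      refine ⟨hmono x y hx0 h1 hy1, ?_⟩
      have hGx : G x = G (x - 1/2) + 1/2 := by
        have := H2 (x - 1/2) (by linarith) (by linarith)
        rw [show x - 1/2 + 1/2 = x by ring] at this
        exact this
      have hGy : G y = G (y - 1/2) + 1/2 := by
        have := H2 (y - 1/2) (by linarith) (by linarith)
        rw [show y - 1/2 + 1/2 = y by ring] at this
        exact this
      -- reduce to x' = x - 1/2 < y' = y - 1/2 < x' + 1/2, x' < 1/2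
      have hy'lt : G (y - 1/2) < G (x - 1/2) + 1/2 := by
        rcases lt_or_ge (y - 1/2) (1/2) with hcy | hcy
        · have := H1 (y - 1/2) (by linarith) hcy
          have := (hmaps (x - 1/2) (by linarith) (by linarith)).1
          linarith
        · have hGy' : G (y - 1/2) = G (y - 1) + 1/2 := by
            have := H2 (y - 1) (by linarith) (by linarith)
            rw [show y - 1 + 1/2 = y - 1/2 by ring] at this
            exact this
          have : G (y - 1) < G (x - 1/2) := hmono (y - 1) (x - 1/2) (by linarith) (by linarith) (by linarith)
          linarith
      linarith
  · -- y + 1/2 < x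
    right
    have hxhalf : (1:ℚ)/2 < x := by linarith
    have hGx : G x = G (x - 1/2) + 1/2 := by
      have := H2 (x - 1/2) (by linarith) (by linarith)
      rw [show x - 1/2 + 1/2 = x by ring] at this
      exact this
    have : G y < G (x - 1/2) := hmono y (x - 1/2) hy0 (by linarith) (by linarith)
    linarith

open scoped Classical in
noncomputable def extmap {n : ℕ} (ρ φ : Fin n → ℚ) : ℚ → ℚ := fun u =>
  if h : ∃ i, ρ i = u then φ h.choose
  else if h2 : ∃ i, ap (ρ i) = u then ap (φ h2.choose) else u

lemma main {n : ℕ} (p q : Fin n → ℚ)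
    (hp : ∀ i, 0 ≤ p i ∧ p i < 1) (hq : ∀ i, 0 ≤ q i ∧ q i < 1)
    (hpinj : Function.Injective p) (hqinj : Function.Injective q)
    (hpq : ∀ i j, relQ (p i) (p j) ↔ relQ (q i) (q j)) (i0 : Fin n) :
    ∃ G G' : ℚ → ℚ,
      (∀ x, 0 ≤ x → x < 1 → 0 ≤ G x ∧ G x < 1) ∧
      (∀ y, 0 ≤ y → y < 1 → 0 ≤ G' y ∧ G' y < 1) ∧
      (∀ x, 0 ≤ x → x < 1 → G' (G x) = x) ∧
      (∀ y, 0 ≤ y → y < 1 → G (G' y) = y) ∧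
      (∀ x y, 0 ≤ x → x < 1 → 0 ≤ y → y < 1 → (relQ x y ↔ relQ (G x) (G y))) ∧
      (∀ i, G (p i) = q i) := by
  classical
  set a0 := p i0 with ha0
  set b0 := q i0 with hb0
  set ρ : Fin n → ℚ := fun i => Int.fract (p i - a0) with hρ
  set φ : Fin n → ℚ := fun i => Int.fract (q i - b0) with hφ
  have hρmem : ∀ i, 0 ≤ ρ i ∧ ρ i < 1 := fun i => ⟨Int.fract_nonneg _, Int.fract_lt_one _⟩
  have hφmem : ∀ i, 0 ≤ φ i ∧ φ i < 1 := fun i => ⟨Int.fract_nonneg _, Int.fract_lt_one _⟩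
  have hsmall : ∀ (u v : ℚ), 0 ≤ u → u < 1 → 0 ≤ v → v < 1 →
      Int.fract (u - a0) = Int.fract (v - a0) → u = v := by
    intro u v hu0 hu1 hv0 hv1 he
    obtain ⟨z, hz⟩ := Int.fract_eq_fract.1 he
    have hz' : u - v = (z : ℚ) := by linarith [hz]
    have h1 : (z : ℚ) < 1 := by linarith
    have h2 : (-1 : ℚ) < (z : ℚ) := by linarith
    have h1' : z < 1 := by exact_mod_cast h1
    have h2' : (-1 : ℤ) < z := by exact_mod_cast h2
    have : z = 0 := by omega
    rw [this] at hz'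
    push_cast at hz'
    linarith
  have hsmallb : ∀ (u v : ℚ), 0 ≤ u → u < 1 → 0 ≤ v → v < 1 →
      Int.fract (u - b0) = Int.fract (v - b0) → u = v := by
    intro u v hu0 hu1 hv0 hv1 he
    obtain ⟨z, hz⟩ := Int.fract_eq_fract.1 he
    have hz' : u - v = (z : ℚ) := by linarith [hz]
    have h1 : (z : ℚ) < 1 := by linarith
    have h2 : (-1 : ℚ) < (z : ℚ) := by linarith
    have h1' : z < 1 := by exact_mod_cast h1
    have h2' : (-1 : ℤ) < z := by exact_mod_cast h2
    have : z = 0 := by omega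
    rw [this] at hz'
    push_cast at hz'
    linarith
  have hρinj : Function.Injective ρ := by
    intro i j he
    exact hpinj (hsmall (p i) (p j) (hp i).1 (hp i).2 (hp j).1 (hp j).2 he)
  have hφinj : Function.Injective φ := by
    intro i j he
    exact hqinj (hsmallb (q i) (q j) (hq i).1 (hq i).2 (hq j).1 (hq j).2 he)
  have hρrel : ∀ i j, relQ (ρ i) (ρ j) ↔ relQ (p i) (p j) := by
    intro i j
    rw [hρ]
    dsimp only
    rw [relQ_fract]
    exact relQ_congr (by ring)
  have hφrel : ∀ i j, relQ (φ i) (φ j) ↔ relQ (q i) (q j) := by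
    intro i j
    rw [hφ]
    dsimp only
    rw [relQ_fract]
    exact relQ_congr (by ring)
  have hrel2 : ∀ i j, relQ (ρ i) (ρ j) ↔ relQ (φ i) (φ j) := by
    intro i j
    rw [hρrel, hφrel]
    exact hpq i j
  have hρ0 : ρ i0 = 0 := by rw [hρ]; dsimp only; rw [← ha0, sub_self, Int.fract_zero]
  have hφ0 : φ i0 = 0 := by rw [hφ]; dsimp only; rw [← hb0, sub_self, Int.fract_zero]
  set f0 := extmap ρ φ with hf0
  -- E1
  have E1 : ∀ i, f0 (ρ i) = φ i := by
    intro i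
    rw [hf0, extmap, dif_pos ⟨i, rfl⟩]
    exact congrArg φ (hρinj (Exists.choose_spec (⟨i, rfl⟩ : ∃ j, ρ j = ρ i)))
  -- antipodal pair transport
  have hap_pair : ∀ i j, ρ j = ap (ρ i) → φ j = ap (φ i) := by
    intro i j hj
    have hne : i ≠ j := by
      intro he
      rw [← he] at hj
      exact ap_ne (hρmem i).1 (hρmem i).2 hj.symm
    have h1 : ¬ relQ (ρ i) (ρ j) := by rw [hj]; exact not_relQ_ap_right (ρ i)
    have h2 : ¬ relQ (ρ j) (ρ i) := by rw [hj]; exact not_relQ_ap_left (ρ i)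
    have h1' : ¬ relQ (φ i) (φ j) := fun hh => h1 ((hrel2 i j).2 hh)
    have h2' : ¬ relQ (φ j) (φ i) := fun hh => h2 ((hrel2 j i).2 hh)
    have hneφ : φ i ≠ φ j := fun he => hne (hφinj he)
    exact eq_ap_of_not_relQ (hφmem i).1 (hφmem i).2 (hφmem j).1 (hφmem j).2 hneφ h1' h2'
  -- E2
  have E2 : ∀ i, f0 (ap (ρ i)) = ap (φ i) := by
    intro i
    by_cases hex : ∃ j, ρ j = ap (ρ i)
    · obtain ⟨j, hj⟩ := hex
      rw [← hj, E1 j, hap_pair i j hj]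
    · rw [hf0, extmap]
      rw [dif_neg hex, dif_pos ⟨i, rfl⟩]
      have hspec := Exists.choose_spec (⟨i, rfl⟩ : ∃ j, ap (ρ j) = ap (ρ i))
      set j := Exists.choose (⟨i, rfl⟩ : ∃ j, ap (ρ j) = ap (ρ i)) with hjdef
      have : ρ j = ρ i := by
        have := congrArg ap hspec
        rwa [ap_ap (hρmem j).1 (hρmem j).2, ap_ap (hρmem i).1 (hρmem i).2] at this
      rw [hρinj this]
  -- membership predicate for walls
  set Wmem : ℚ → Prop := fun u => (∃ i, ρ i = u) ∨ (∃ i, ap (ρ i) = u) with hWmem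
  have E3 : ∀ u, Wmem u → 0 ≤ u ∧ u < 1 := by
    rintro u (⟨i, rfl⟩ | ⟨i, rfl⟩)
    · exact hρmem i
    · exact ap_mem _
  have E4 : ∀ u, Wmem u → 0 ≤ f0 u ∧ f0 u < 1 := by
    rintro u (⟨i, rfl⟩ | ⟨i, rfl⟩)
    · rw [E1]; exact hφmem i
    · rw [E2]; exact ap_mem _
  have W0 : Wmem 0 := Or.inl ⟨i0, hρ0⟩
  have f00 : f0 0 = 0 := by
    have h := E1 i0
    rw [hρ0, hφ0] at h
    exact h
  -- halves
  have ap_lt_half : ∀ x : ℚ, 0 ≤ x → x < 1 → (ap x < 1/2 ↔ 1/2 ≤ x) := by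
    intro x h0 h1
    rcases lt_or_ge x (1/2) with hc | hc
    · rw [ap_eq_low h0 hc]
      constructor
      · intro hh; linarith
      · intro hh; linarith
    · rw [ap_eq_high hc h1]
      constructor
      · intro hh; linarith
      · intro hh; linarith
  have Hhalfρ : ∀ i, ρ i < 1/2 ↔ φ i < 1/2 := by
    intro i
    rcases lt_trichotomy (ρ i) (1/2) with hlt | heq | hgt
    · rcases eq_or_lt_of_le (hρmem i).1 with hz | hpos
      · have hii0 : i = i0 := hρinj (by rw [← hz, hρ0])
        rw [hii0, hρ0, hφ0]
      · have hr : relQ (ρ i0) (ρ i) := by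
          rw [hρ0, relQ_iff (le_refl 0) one_pos (hρmem i).1 (hρmem i).2]
          exact Or.inl ⟨hpos, by linarith⟩
        have hr' := (hrel2 i0 i).1 hr
        rw [hφ0, relQ_iff (le_refl 0) one_pos (hφmem i).1 (hφmem i).2] at hr'
        rcases hr' with ⟨h1, h2⟩ | h1
        · constructor <;> intro <;> linarith
        · exfalso; linarith [(hφmem i).1]
    · -- ρ i = 1/2 = ap 0 = ap (ρ i0)
      have : ρ i = ap (ρ i0) := by
        rw [hρ0, ap, zero_add, Int.fract_eq_self.2 (by norm_num)]
        exact heq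
      have hphi : φ i = ap (φ i0) := hap_pair i0 i this
      rw [hphi, hφ0, ap, zero_add, Int.fract_eq_self.2 (by norm_num)]
      constructor <;> intro <;> linarith
    · have hr : relQ (ρ i) (ρ i0) := by
        rw [hρ0, relQ_iff (hρmem i).1 (hρmem i).2 (le_refl 0) one_pos]
        exact Or.inr (by linarith)
      have hr' := (hrel2 i i0).1 hr
      rw [hφ0, relQ_iff (hφmem i).1 (hφmem i).2 (le_refl 0) one_pos] at hr'
      rcases hr' with ⟨h1, h2⟩ | h1
      · exfalso; linarith [(hφmem i).1]
      · constructor <;> intro <;> linarith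
  have E5 : ∀ u, Wmem u → (u < 1/2 ↔ f0 u < 1/2) := by
    rintro u (⟨i, rfl⟩ | ⟨i, rfl⟩)
    · rw [E1]; exact Hhalfρ i
    · rw [E2, ap_lt_half _ (hρmem i).1 (hρmem i).2, ap_lt_half _ (hφmem i).1 (hφmem i).2]
      rw [← not_lt, ← not_lt, Hhalfρ i]
  -- relation preservation on walls
  have E6 : ∀ u v, Wmem u → Wmem v → (relQ u v ↔ relQ (f0 u) (f0 v)) := by
    rintro u v (⟨i, rfl⟩ | ⟨i, rfl⟩) (⟨j, rfl⟩ | ⟨j, rfl⟩)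
    · rw [E1, E1]; exact hrel2 i j
    · rw [E1, E2, relQ_ap_right, relQ_ap_right]; exact hrel2 j i
    · rw [E2, E1, relQ_ap_left, relQ_ap_left]; exact hrel2 j i
    · rw [E2, E2, relQ_ap_left, relQ_ap_right, relQ_ap_left, relQ_ap_right]
      exact hrel2 i j
  -- f0 commutes with ap on walls
  have E9 : ∀ u, Wmem u → f0 (ap u) = ap (f0 u) := by
    rintro u (⟨i, rfl⟩ | ⟨i, rfl⟩)
    · rw [E1]; exact E2 i
    · rw [ap_ap (hρmem i).1 (hρmem i).2, E1, E2, ap_ap (hφmem i).1 (hφmem i).2]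
  have Wap : ∀ u, Wmem u → Wmem (ap u) := by
    rintro u (⟨i, rfl⟩ | ⟨i, rfl⟩)
    · exact Or.inr ⟨i, rfl⟩
    · exact Or.inl ⟨i, (ap_ap (hρmem i).1 (hρmem i).2).symm⟩
  -- monotonicity on walls
  have E7 : ∀ u v, Wmem u → Wmem v → u < v → f0 u < f0 v := by
    intro u v hu hv huv
    have hum := E3 u hu
    have hvm := E3 v hv
    have hfu := E4 u hu
    have hfv := E4 v hv
    rcases lt_or_ge u (1/2) with hcu | hcu
    · rcases lt_or_ge v (1/2) with hcv | hcv
      · have hr : relQ u v := by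
          rw [relQ_iff hum.1 hum.2 hvm.1 hvm.2]
          exact Or.inl ⟨huv, by linarith⟩
        have hr' := (E6 u v hu hv).1 hr
        have hfu2 := (E5 u hu).1 hcu
        have hfv2 := (E5 v hv).1 hcv
        rw [relQ_iff hfu.1 hfu.2 hfv.1 hfv.2] at hr'
        rcases hr' with ⟨h1, _⟩ | h1
        · exact h1
        · exfalso; linarith
      · have hfu2 := (E5 u hu).1 hcu
        have hfv2 : ¬ f0 v < 1/2 := fun hh => absurd ((E5 v hv).2 hh) (not_lt.2 hcv)
        push_neg at hfv2
        linarith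
    · have hcv : 1/2 ≤ v := le_trans hcu (le_of_lt huv)
      have hr : relQ u v := by
        rw [relQ_iff hum.1 hum.2 hvm.1 hvm.2]
        exact Or.inl ⟨huv, by linarith⟩
      have hr' := (E6 u v hu hv).1 hr
      have hfu2 : ¬ f0 u < 1/2 := fun hh => absurd ((E5 u hu).2 hh) (not_lt.2 hcu)
      have hfv2 : ¬ f0 v < 1/2 := fun hh => absurd ((E5 v hv).2 hh) (not_lt.2 hcv)
      push_neg at hfu2 hfv2
      rw [relQ_iff hfu.1 hfu.2 hfv.1 hfv.2] at hr'
      rcases hr' with ⟨h1, _⟩ | h1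
      · exact h1
      · exfalso; linarith
  -- the finite set of walls strictly inside the first half
  set S0 : Finset ℚ :=
    (Finset.image ρ Finset.univ ∪ Finset.image (fun i => ap (ρ i)) Finset.univ).filter
      (fun u => 0 < u ∧ u < 1/2) with hS0
  have hS0mem : ∀ u, u ∈ S0 ↔ (Wmem u ∧ 0 < u ∧ u < 1/2) := by
    intro u
    rw [hS0, Finset.mem_filter, Finset.mem_union]
    simp only [Finset.mem_image, Finset.mem_univ, true_and, hWmem]
  set m := S0.card with hm
  set siso := S0.orderIsoOfFin (rfl : S0.card = m) with hsiso
  set sfun : Fin m → ℚ := fun i => (siso i : ℚ) with hsfun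
  have hsmem : ∀ i, sfun i ∈ S0 := fun i => (siso i).2
  have hsmono : StrictMono sfun := by
    intro i j hij
    exact_mod_cast (siso.lt_iff_lt.2 hij)
  have hssurj : ∀ u, u ∈ S0 → ∃ i, sfun i = u := by
    intro u hu
    refine ⟨siso.symm ⟨u, hu⟩, ?_⟩
    rw [hsfun]
    dsimp only
    rw [OrderIso.apply_symm_apply]
  set t : Fin m → ℚ := fun i => f0 (sfun i) with ht
  have hsW : ∀ i, Wmem (sfun i) := fun i => ((hS0mem _).1 (hsmem i)).1
  have hsbd : ∀ i, 0 < sfun i ∧ sfun i < 1/2 := fun i => ((hS0mem _).1 (hsmem i)).2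
  have htmono : StrictMono t := by
    intro i j hij
    exact E7 _ _ (hsW i) (hsW j) (hsmono hij)
  have htbd : ∀ i, 0 < t i ∧ t i < 1/2 := by
    intro i
    constructor
    · have := E7 0 (sfun i) W0 (hsW i) (hsbd i).1
      rw [f00] at this
      exact this
    · exact (E5 _ (hsW i)).1 (hsbd i).2
  obtain ⟨F, F', hFa, hFb, hF'b, hFrt, hF'rt, hFm, hFs⟩ :=
    interp m 0 (1/2) 0 (1/2) (by norm_num) (by norm_num) sfun t hsmono htmono hsbd htbd
  -- F' is strictly monotone too
  have hF'm : ∀ y1 y2, 0 ≤ y1 → y1 < y2 → y2 < 1/2 → F' y1 < F' y2 := by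
    intro y1 y2 h1 h2 h3
    by_contra hcon
    push_neg at hcon
    have hb1 := hF'b y1 h1 (by linarith)
    have hb2 := hF'b y2 (by linarith) h3
    rcases eq_or_lt_of_le hcon with he | hlt
    · have hthis : F (F' y2) = F (F' y1) := by rw [he]
      rw [hF'rt _ h1 (by linarith), hF'rt _ (by linarith) h3] at hthis
      linarith
    · have hthis := hFm (F' y2) (F' y1) hb2.1 hlt hb1.2
      rw [hF'rt _ h1 (by linarith), hF'rt _ (by linarith) h3] at hthis
      linarith
  -- bounds in the convenient form
  have hFb' : ∀ x, 0 ≤ x → x < 1/2 → 0 ≤ F x ∧ F x < 1/2 := fun x h1 h2 => hFb x h1 h2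
  have hF'b' : ∀ y, 0 ≤ y → y < 1/2 → 0 ≤ F' y ∧ F' y < 1/2 := fun y h1 h2 => hF'b y h1 h2
  have hFm' : ∀ x1 x2, 0 ≤ x1 → x1 < x2 → x2 < 1/2 → F x1 < F x2 := hFm
  set G0 : ℚ → ℚ := D F with hG0
  set G0' : ℚ → ℚ := D F' with hG0'
  have hG0maps := D_maps hFb'
  have hG0'maps := D_maps hF'b'
  have hG0mono := D_mono hFb' hFm'
  have hG0'mono := D_mono hF'b' hF'm
  have hG0ap := D_ap hFb'
  have hG0'ap := D_ap hF'b'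
  have hG0rt := D_rt hFb' hFrt
  have hG0rt' := D_rt hF'b' hF'rt
  rw [← hG0] at hG0maps hG0mono hG0ap hG0rt hG0rt'
  rw [← hG0'] at hG0'maps hG0'mono hG0'ap hG0rt hG0rt' 
  -- relation preservation both ways for G0
  have hG0rel : ∀ x y, 0 ≤ x → x < 1 → 0 ≤ y → y < 1 → (relQ x y ↔ relQ (G0 x) (G0 y)) := by
    intro x y hx0 hx1 hy0 hy1
    constructor
    · exact relpres hG0maps hG0mono hG0ap x y hx0 hx1 hy0 hy1
    · intro hr
      have hx' := hG0maps x hx0 hx1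
      have hy' := hG0maps y hy0 hy1
      have := relpres hG0'maps hG0'mono hG0'ap (G0 x) (G0 y) hx'.1 hx'.2 hy'.1 hy'.2 hr
      rwa [hG0rt x hx0 hx1, hG0rt y hy0 hy1] at this
  -- G0 agrees with f0 on walls
  have E8 : ∀ u, Wmem u → G0 u = f0 u := by
    have hhalfagree : ∀ u, Wmem u → 0 ≤ u → u < 1/2 → G0 u = f0 u := by
      intro u hu h0 hhalf
      have hDu : G0 u = F u := by
        rw [hG0]; unfold D; rw [if_pos hhalf]
      rcases eq_or_lt_of_le h0 with hz | hpos
      · rw [hDu, ← hz, hFa, f00]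
      · obtain ⟨i, hi⟩ := hssurj u ((hS0mem u).2 ⟨hu, hpos, hhalf⟩)
        rw [hDu, ← hi, hFs i]
    intro u hu
    have hum := E3 u hu
    rcases lt_or_ge u (1/2) with hc | hc
    · exact hhalfagree u hu hum.1 hc
    · -- u ≥ 1/2
      have hDu : G0 u = F (u - 1/2) + 1/2 := by
        rw [hG0]; unfold D; rw [if_neg (not_lt.2 hc)]
      have hapu : ap u = u - 1/2 := ap_eq_high hc hum.2
      have hWapu : Wmem (ap u) := Wap u hu
      have hG0apu : G0 (ap u) = f0 (ap u) := by
        apply hhalfagree _ hWapu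
        · rw [hapu]; linarith
        · rw [hapu]; linarith [hum.2]
      have hG0apu' : G0 (ap u) = F (u - 1/2) := by
        rw [hapu, hG0]; unfold D; rw [if_pos (by linarith [hum.2])]
      have hf0ap : f0 (ap u) = ap (f0 u) := E9 u hu
      have hfum := E4 u hu
      have hfuhalf : 1/2 ≤ f0 u := by
        by_contra hcon
        push_neg at hcon
        exact absurd ((E5 u hu).2 hcon) (not_lt.2 hc)
      have hapf : ap (f0 u) = f0 u - 1/2 := ap_eq_high hfuhalf hfum.2
      rw [hDu, ← hG0apu', hG0apu, hf0ap, hapf]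
      ring
  -- assemble the final maps
  refine ⟨fun x => Int.fract (G0 (Int.fract (x - a0)) + b0),
          fun y => Int.fract (G0' (Int.fract (y - b0)) + a0),
          fun x _ _ => ⟨Int.fract_nonneg _, Int.fract_lt_one _⟩,
          fun y _ _ => ⟨Int.fract_nonneg _, Int.fract_lt_one _⟩, ?_, ?_, ?_, ?_⟩
  · intro x hx0 hx1
    dsimp only
    have hu : 0 ≤ Int.fract (x - a0) ∧ Int.fract (x - a0) < 1 :=
      ⟨Int.fract_nonneg _, Int.fract_lt_one _⟩
    have hz := hG0maps _ hu.1 hu.2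
    have key : Int.fract (Int.fract (G0 (Int.fract (x - a0)) + b0) - b0)
        = G0 (Int.fract (x - a0)) := by
      rw [show Int.fract (G0 (Int.fract (x - a0)) + b0) - b0
            = Int.fract (G0 (Int.fract (x - a0)) + b0) + (-b0) by ring,
        fract_add_fract,
        show G0 (Int.fract (x - a0)) + b0 + (-b0) = G0 (Int.fract (x - a0)) by ring,
        Int.fract_eq_self.2 hz]
    rw [key, hG0rt _ hu.1 hu.2, fract_add_fract,
      show x - a0 + a0 = x by ring, Int.fract_eq_self.2 ⟨hx0, hx1⟩]
  · intro y hy0 hy1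
    dsimp only
    have hu : 0 ≤ Int.fract (y - b0) ∧ Int.fract (y - b0) < 1 :=
      ⟨Int.fract_nonneg _, Int.fract_lt_one _⟩
    have hz := hG0'maps _ hu.1 hu.2
    have key : Int.fract (Int.fract (G0' (Int.fract (y - b0)) + a0) - a0)
        = G0' (Int.fract (y - b0)) := by
      rw [show Int.fract (G0' (Int.fract (y - b0)) + a0) - a0
            = Int.fract (G0' (Int.fract (y - b0)) + a0) + (-a0) by ring,
        fract_add_fract,
        show G0' (Int.fract (y - b0)) + a0 + (-a0) = G0' (Int.fract (y - b0)) by ring,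
        Int.fract_eq_self.2 hz]
    rw [key, hG0rt' _ hu.1 hu.2, fract_add_fract,
      show y - b0 + b0 = y by ring, Int.fract_eq_self.2 ⟨hy0, hy1⟩]
  · intro x y hx0 hx1 hy0 hy1
    dsimp only
    have hux : 0 ≤ Int.fract (x - a0) ∧ Int.fract (x - a0) < 1 :=
      ⟨Int.fract_nonneg _, Int.fract_lt_one _⟩
    have huy : 0 ≤ Int.fract (y - a0) ∧ Int.fract (y - a0) < 1 :=
      ⟨Int.fract_nonneg _, Int.fract_lt_one _⟩
    have step1 : relQ x y ↔ relQ (Int.fract (x - a0)) (Int.fract (y - a0)) := by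
      rw [relQ_fract]
      exact relQ_congr (by ring)
    have step2 := hG0rel _ _ hux.1 hux.2 huy.1 huy.2
    have step3 : relQ (G0 (Int.fract (x - a0))) (G0 (Int.fract (y - a0))) ↔
        relQ (Int.fract (G0 (Int.fract (x - a0)) + b0)) (Int.fract (G0 (Int.fract (y - a0)) + b0)) := by
      rw [relQ_fract]
      exact (relQ_congr (by ring)).symm
    rw [step1, step2, step3]
  · intro i
    dsimp only
    have hWi : Wmem (ρ i) := Or.inl ⟨i, rfl⟩
    have : Int.fract (p i - a0) = ρ i := rfl
    rw [this, E8 _ hWi, E1 i, hφ]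
    dsimp only
    rw [fract_add_fract, show q i - b0 + b0 = q i by ring, Int.fract_eq_self.2 (hq i)]

lemma s2rel_iff (x y : S2) : s2rel x y ↔ relQ x.1 y.1 := Iff.rfl

theorem S2_ultrahomogeneous :
    ∀ (A B : Finset S2) (h : (↑A : Set S2) → (↑B : Set S2)), Function.Bijective h →
      (∀ x y : (↑A : Set S2), s2rel (x : S2) (y : S2) ↔ s2rel (h x : S2) (h y : S2)) →
      ∃ g : Equiv.Perm S2, (∀ a b : S2, s2rel (g a) (g b) ↔ s2rel a b) ∧
        ∀ x : (↑A : Set S2), g (x : S2) = (h x : S2) := by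
  intro A B h hbij hiff
  classical
  rcases A.eq_empty_or_nonempty with hA | ⟨a₀, ha₀⟩
  · refine ⟨Equiv.refl S2, fun a b => Iff.rfl, fun x => absurd x.2 (by simp [hA])⟩
  · -- enumerate A
    set n := A.card with hn
    set e : Fin n ≃ {x // x ∈ A} := (A.equivFin).symm with he
    set toSet : {x // x ∈ A} → (↑A : Set S2) := fun a => ⟨a.1, Finset.mem_coe.2 a.2⟩ with htoSet
    set p : Fin n → ℚ := fun i => ((e i).1 : S2).1 with hpdef
    set q : Fin n → ℚ := fun i => ((h (toSet (e i))) : S2).1 with hqdef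
    have hp : ∀ i, 0 ≤ p i ∧ p i < 1 := fun i => ((e i).1).2
    have hq : ∀ i, 0 ≤ q i ∧ q i < 1 := fun i => ((h (toSet (e i))) : S2).2
    have hpinj : Function.Injective p := by
      intro i j hij
      apply e.injective
      exact Subtype.ext (Subtype.ext hij)
    have hqinj : Function.Injective q := by
      intro i j hij
      apply e.injective
      have h1 : h (toSet (e i)) = h (toSet (e j)) :=
        Subtype.ext (Subtype.ext hij)
      have h2 := hbij.1 h1
      have h3 : (toSet (e i)).1 = (toSet (e j)).1 := congrArg Subtype.val h2
      exact Subtype.ext h3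
    have hpq : ∀ i j, relQ (p i) (p j) ↔ relQ (q i) (q j) := by
      intro i j
      have := hiff (toSet (e i)) (toSet (e j))
      rw [s2rel_iff, s2rel_iff] at this
      exact this
    have hi0 : ∃ i0 : Fin n, True := by
      refine ⟨e.symm ⟨a₀, ha₀⟩, trivial⟩
    obtain ⟨i0, -⟩ := hi0
    obtain ⟨G, G', hGm, hG'm, hrt, hrt', hGrel, hGpts⟩ :=
      main p q hp hq hpinj hqinj hpq i0
    refine ⟨⟨fun x => ⟨G x.1, hGm x.1 x.2.1 x.2.2⟩,
             fun y => ⟨G' y.1, hG'm y.1 y.2.1 y.2.2⟩, ?_, ?_⟩, ?_, ?_⟩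
    · intro x
      exact Subtype.ext (hrt x.1 x.2.1 x.2.2)
    · intro y
      exact Subtype.ext (hrt' y.1 y.2.1 y.2.2)
    · intro a b
      rw [s2rel_iff, s2rel_iff]
      exact (hGrel a.1 b.1 a.2.1 a.2.2 b.2.1 b.2.2).symm
    · intro x
      have hxA : x.1 ∈ A := Finset.mem_coe.1 x.2
      set i : Fin n := e.symm ⟨x.1, hxA⟩ with hi
      have hei : e i = ⟨x.1, hxA⟩ := e.apply_symm_apply _
      have hpi : p i = (x : S2).1 := by rw [hpdef]; dsimp only; rw [hei]
      have htoSetx : toSet (e i) = x := by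
        rw [hei]
      have hqi : q i = ((h x) : S2).1 := by rw [hqdef]; dsimp only; rw [htoSetx]
      have := hGpts i
      rw [hpi, hqi] at this
      exact Subtype.ext this

end Stmt15
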